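/- Let γ, ν ∈ ℝ^ℓ be nonnegative vectors and let T be an extreme point of the convex set J^{γ,ν}_{ℓ,k}. Then T has at most ℓ·2^{ℓ−1} pairwise distinct columns. -/

import Mathlib

open scoped Classical ENNReal
open Finset

noncomputable section

/-- `p` is a probability distribution on `Fin k`. -/
def IsDist {k : ℕ} (p : Fin k → ℝ) : Prop :=
  (∀ i, 0 ≤ p i) ∧ ∑ i, p i = 1

/-- `T` is a channel from `[k]` to `[ℓ]`: nonnegative entries, columns sum to 1. -/
def IsChannel {ℓ k : ℕ} (T : Matrix (Fin ℓ) (Fin k) ℝ) : Prop :=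
  (∀ r c, 0 ≤ T r c) ∧ ∀ c, ∑ r, T r c = 1

/-- Squared Hellinger divergence `d_h²(p,q) = Σ_i (√p_i − √q_i)²`. -/
def hellingerSq {k : ℕ} (p q : Fin k → ℝ) : ℝ :=
  ∑ i, (Real.sqrt (p i) - Real.sqrt (q i)) ^ 2

/-- Total variation distance `d_TV(p,q) = (1/2) Σ_i |p_i − q_i|`. -/
def tvDist {k : ℕ} (p q : Fin k → ℝ) : ℝ :=
  (1 / 2) * ∑ i, |p i - q i|

/-- `T` is an `ε`-LDP channel: `T(r,c) ≤ e^ε T(r,c')` for all rows `r`, columns `c, c'`. -/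
def IsLDP {ℓ k : ℕ} (ε : ℝ) (T : Matrix (Fin ℓ) (Fin k) ℝ) : Prop :=
  IsChannel T ∧ ∀ r c c', T r c ≤ Real.exp ε * T r c'

/-- The LP family of channels `J^{γ,ν}_{ℓ,k}`:
channels `T` with `T(j,i) ≤ γ_j T(j,i') + ν_j` for all rows `j` and columns `i, i'`. -/
def IsLP {ℓ k : ℕ} (γ ν : Fin ℓ → ℝ) (T : Matrix (Fin ℓ) (Fin k) ℝ) : Prop :=
  IsChannel T ∧ ∀ (j : Fin ℓ) (i i' : Fin k), T j i ≤ γ j * T j i' + ν j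

/-- Minimum entry of row `r` of `T`. -/
def rowMin {ℓ k : ℕ} (T : Matrix (Fin ℓ) (Fin k) ℝ) (r : Fin ℓ) : ℝ :=
  sInf (Set.range fun c => T r c)

/-- Maximum entry of row `r` of `T`. -/
def rowMax {ℓ k : ℕ} (T : Matrix (Fin ℓ) (Fin k) ℝ) (r : Fin ℓ) : ℝ :=
  sSup (Set.range fun c => T r c)

/-- The entry `T(r,c)` is min-tight: `T(r,c) = m_r` and `M_r = γ_r m_r + ν_r`. -/
def MinTight {ℓ k : ℕ} (γ ν : Fin ℓ → ℝ) (T : Matrix (Fin ℓ) (Fin k) ℝ)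
    (r : Fin ℓ) (c : Fin k) : Prop :=
  T r c = rowMin T r ∧ rowMax T r = γ r * rowMin T r + ν r

/-- The entry `T(r,c)` is max-tight: `T(r,c) = M_r` and `M_r = γ_r m_r + ν_r`. -/
def MaxTight {ℓ k : ℕ} (γ ν : Fin ℓ → ℝ) (T : Matrix (Fin ℓ) (Fin k) ℝ)
    (r : Fin ℓ) (c : Fin k) : Prop :=
  T r c = rowMax T r ∧ rowMax T r = γ r * rowMin T r + ν r

namespace Stmt15Aux

variable {ℓ k : ℕ}

lemma rowMin_le (T : Matrix (Fin ℓ) (Fin k) ℝ) (r : Fin ℓ) (c : Fin k) :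
    rowMin T r ≤ T r c :=
  csInf_le (Set.finite_range _).bddBelow ⟨c, rfl⟩

lemma le_rowMax (T : Matrix (Fin ℓ) (Fin k) ℝ) (r : Fin ℓ) (c : Fin k) :
    T r c ≤ rowMax T r :=
  le_csSup (Set.finite_range _).bddAbove ⟨c, rfl⟩

lemma rowMin_attained (T : Matrix (Fin ℓ) (Fin k) ℝ) (r : Fin ℓ) (c0 : Fin k) :
    ∃ c, T r c = rowMin T r := by
  have : Nonempty (Fin k) := ⟨c0⟩
  have h : rowMin T r ∈ Set.range fun c => T r c :=
    (Set.range_nonempty _).csInf_mem (Set.finite_range _)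
  obtain ⟨c, hc⟩ := h; exact ⟨c, hc⟩

lemma rowMax_attained (T : Matrix (Fin ℓ) (Fin k) ℝ) (r : Fin ℓ) (c0 : Fin k) :
    ∃ c, T r c = rowMax T r := by
  have : Nonempty (Fin k) := ⟨c0⟩
  have h : rowMax T r ∈ Set.range fun c => T r c :=
    (Set.range_nonempty _).csSup_mem (Set.finite_range _)
  obtain ⟨c, hc⟩ := h; exact ⟨c, hc⟩

lemma rowMax_le_bound (γ ν : Fin ℓ → ℝ) (T : Matrix (Fin ℓ) (Fin k) ℝ)
    (hmem : IsLP γ ν T) (j : Fin ℓ) (c0 : Fin k) :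
    rowMax T j ≤ γ j * rowMin T j + ν j := by
  obtain ⟨cM, hcM⟩ := rowMax_attained T j c0
  obtain ⟨cm, hcm⟩ := rowMin_attained T j c0
  have := hmem.2 j cM cm
  rw [hcM, hcm] at this
  exact this

/-- The conditions on row `j` so that adding `t` to entry `(j,c)` keeps row `j` feasible. -/
def RowOK (γ ν : Fin ℓ → ℝ) (T : Matrix (Fin ℓ) (Fin k) ℝ) (c : Fin k) (j : Fin ℓ)
    (t : ℝ) : Prop :=
  0 ≤ T j c + t ∧ T j c + t ≤ γ j * rowMin T j + ν j ∧
    rowMax T j ≤ γ j * (T j c + t) + ν j ∧ T j c + t ≤ γ j * (T j c + t) + ν j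

lemma strict_rowOK (γ ν : Fin ℓ → ℝ) (hγ : ∀ j, 0 ≤ γ j)
    (T : Matrix (Fin ℓ) (Fin k) ℝ) (hmem : IsLP γ ν T) (c : Fin k) (j : Fin ℓ)
    (h1 : rowMin T j < T j c) (h2 : T j c < rowMax T j) (t : ℝ)
    (ht : |t| ≤ min (T j c - rowMin T j) (γ j * rowMin T j + ν j - T j c)) :
    RowOK γ ν T c j t := by
  have hM := rowMax_le_bound γ ν T hmem j c
  have hm0 : 0 ≤ rowMin T j := by
    obtain ⟨cm, hcm⟩ := rowMin_attained T j c
    rw [← hcm]; exact hmem.1.1 j cm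
  have habs := abs_le.mp ht
  have ht1' : rowMin T j ≤ T j c + t := by
    have := habs.1
    have h := min_le_left (T j c - rowMin T j) (γ j * rowMin T j + ν j - T j c)
    linarith
  have ht2' : T j c + t ≤ γ j * rowMin T j + ν j := by
    have := habs.2
    have h := min_le_right (T j c - rowMin T j) (γ j * rowMin T j + ν j - T j c)
    linarith
  refine ⟨by linarith, ht2', ?_, ?_⟩
  · have : γ j * rowMin T j ≤ γ j * (T j c + t) :=
      mul_le_mul_of_nonneg_left ht1' (hγ j)
    linarith
  · have : γ j * rowMin T j ≤ γ j * (T j c + t) :=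
      mul_le_mul_of_nonneg_left ht1' (hγ j)
    linarith

lemma perturb_mem (γ ν : Fin ℓ → ℝ) (hγ : ∀ j, 0 ≤ γ j)
    (T : Matrix (Fin ℓ) (Fin k) ℝ) (hmem : IsLP γ ν T)
    (c : Fin k) (j1 j2 : Fin ℓ) (h12 : j1 ≠ j2) (t1 t2 : ℝ) (hsum : t1 + t2 = 0)
    (h1 : RowOK γ ν T c j1 t1) (h2 : RowOK γ ν T c j2 t2) :
    IsLP γ ν (Matrix.of fun j i => T j i +
      (if j = j1 ∧ i = c then t1 else if j = j2 ∧ i = c then t2 else 0)) := by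
  set E : Fin ℓ → Fin k → ℝ := fun j i =>
    if j = j1 ∧ i = c then t1 else if j = j2 ∧ i = c then t2 else 0 with hE
  have hrow : ∀ (j : Fin ℓ) (tj : ℝ), RowOK γ ν T c j tj →
      ∀ i i', (T j i + if i = c then tj else 0) ≤
        γ j * (T j i' + if i' = c then tj else 0) + ν j := by
    intro j tj hOK i i'
    obtain ⟨hA, hB, hC, hD⟩ := hOK
    by_cases hic : i = c <;> by_cases hic' : i' = c <;> simp [hic, hic']
    · subst hic; subst hic'; exact hD
    · subst hic
      have : γ j * rowMin T j ≤ γ j * T j i' :=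
        mul_le_mul_of_nonneg_left (rowMin_le T j i') (hγ j)
      linarith
    · subst hic'
      have := le_rowMax T j i
      linarith
    · exact hmem.2 j i i'
  constructor
  · constructor
    · intro r c'
      simp only [Matrix.of_apply, hE]
      by_cases hr1 : r = j1 ∧ c' = c
      · rw [if_pos hr1, hr1.1, hr1.2]
        exact h1.1
      · by_cases hr2 : r = j2 ∧ c' = c
        · rw [if_neg hr1, if_pos hr2, hr2.1, hr2.2]
          exact h2.1
        · rw [if_neg hr1, if_neg hr2, add_zero]
          exact hmem.1.1 r c'
    · intro c'
      simp only [Matrix.of_apply, hE]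
      rw [Finset.sum_add_distrib]
      by_cases hc' : c' = c
      · rw [hc']
        have hrepr : ∀ r : Fin ℓ,
            (if r = j1 ∧ c = c then t1 else if r = j2 ∧ c = c then t2 else 0)
              = (if r = j1 then t1 else 0) + (if r = j2 then t2 else 0) := by
          intro r
          by_cases hr1 : r = j1
          · subst hr1
            simp [h12]
          · by_cases hr2 : r = j2 <;> simp [hr1, hr2, Ne.symm h12]
        have hEsum : (∑ r : Fin ℓ,
            if r = j1 ∧ c = c then t1 else if r = j2 ∧ c = c then t2 else 0) = 0 := by
          rw [Finset.sum_congr rfl (fun r _ => hrepr r), Finset.sum_add_distrib]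
          simp [Finset.sum_ite_eq', hsum]
        rw [hEsum, add_zero]
        exact hmem.1.2 c
      · have hEsum : (∑ r : Fin ℓ,
            if r = j1 ∧ c' = c then t1 else if r = j2 ∧ c' = c then t2 else 0) = 0 := by
          apply Finset.sum_eq_zero
          intro r _
          simp [hc']
        rw [hEsum, add_zero]
        exact hmem.1.2 c'
  · intro j i i'
    simp only [Matrix.of_apply, hE]
    by_cases hj1 : j = j1
    · have hne2 : j ≠ j2 := by rw [hj1]; exact h12
      have e1 : ∀ i0 : Fin k,
          (if j = j1 ∧ i0 = c then t1 else if j = j2 ∧ i0 = c then t2 else 0)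
            = (if i0 = c then t1 else 0) := by
        intro i0; by_cases h : i0 = c <;> simp [h, hj1, hne2]
      rw [e1 i, e1 i']
      have h1' : RowOK γ ν T c j t1 := by rw [hj1]; exact h1
      exact hrow j t1 h1' i i'
    · by_cases hj2 : j = j2
      · have e2 : ∀ i0 : Fin k,
            (if j = j1 ∧ i0 = c then t1 else if j = j2 ∧ i0 = c then t2 else 0)
              = (if i0 = c then t2 else 0) := by
          intro i0; by_cases h : i0 = c <;> simp [h, hj1, hj2, Ne.symm h12]
        rw [e2 i, e2 i']
        have h2' : RowOK γ ν T c j t2 := by rw [hj2]; exact h2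
        exact hrow j t2 h2' i i'
      · have e3 : ∀ i0 : Fin k,
            (if j = j1 ∧ i0 = c then t1 else if j = j2 ∧ i0 = c then t2 else 0) = 0 := by
          intro i0; simp [hj1, hj2]
        rw [e3 i, e3 i', add_zero, add_zero]
        exact hmem.2 j i i'

lemma at_most_one_strict (γ ν : Fin ℓ → ℝ) (hγ : ∀ j, 0 ≤ γ j)
    (T : Matrix (Fin ℓ) (Fin k) ℝ)
    (hT : T ∈ ({S : Matrix (Fin ℓ) (Fin k) ℝ | IsLP γ ν S}).extremePoints ℝ)
    (c : Fin k) (j1 j2 : Fin ℓ) (h12 : j1 ≠ j2)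
    (hs1 : rowMin T j1 < T j1 c ∧ T j1 c < rowMax T j1)
    (hs2 : rowMin T j2 < T j2 c ∧ T j2 c < rowMax T j2) : False := by
  have hmem : IsLP γ ν T := hT.1
  set δ1 := min (T j1 c - rowMin T j1) (γ j1 * rowMin T j1 + ν j1 - T j1 c) with hδ1
  set δ2 := min (T j2 c - rowMin T j2) (γ j2 * rowMin T j2 + ν j2 - T j2 c) with hδ2
  have hM1 := rowMax_le_bound γ ν T hmem j1 c
  have hM2 := rowMax_le_bound γ ν T hmem j2 c
  have hδ1pos : 0 < δ1 := lt_min (by linarith [hs1.1]) (by linarith [hs1.2])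
  have hδ2pos : 0 < δ2 := lt_min (by linarith [hs2.1]) (by linarith [hs2.2])
  set δ := min δ1 δ2 with hδ
  have hδpos : 0 < δ := lt_min hδ1pos hδ2pos
  have habs1 : |δ| ≤ δ1 := by rw [abs_of_pos hδpos]; exact min_le_left _ _
  have habs2 : |δ| ≤ δ2 := by rw [abs_of_pos hδpos]; exact min_le_right _ _
  have habs1' : |(-δ)| ≤ δ1 := by rw [abs_neg]; exact habs1
  have habs2' : |(-δ)| ≤ δ2 := by rw [abs_neg]; exact habs2
  have hOK1p := strict_rowOK γ ν hγ T hmem c j1 hs1.1 hs1.2 δ habs1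
  have hOK1m := strict_rowOK γ ν hγ T hmem c j1 hs1.1 hs1.2 (-δ) habs1'
  have hOK2p := strict_rowOK γ ν hγ T hmem c j2 hs2.1 hs2.2 δ habs2
  have hOK2m := strict_rowOK γ ν hγ T hmem c j2 hs2.1 hs2.2 (-δ) habs2'
  set Tp := Matrix.of fun j i => T j i +
      (if j = j1 ∧ i = c then δ else if j = j2 ∧ i = c then -δ else 0) with hTp
  set Tm := Matrix.of fun j i => T j i +
      (if j = j1 ∧ i = c then -δ else if j = j2 ∧ i = c then δ else 0) with hTm
  have hTpmem : IsLP γ ν Tp :=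
    perturb_mem γ ν hγ T hmem c j1 j2 h12 δ (-δ) (by ring) hOK1p hOK2m
  have hTmmem : IsLP γ ν Tm :=
    perturb_mem γ ν hγ T hmem c j1 j2 h12 (-δ) δ (by ring) hOK1m hOK2p
  have hseg : T ∈ openSegment ℝ Tp Tm := by
    refine ⟨1/2, 1/2, by norm_num, by norm_num, by norm_num, ?_⟩
    funext j i
    have hz : (if j = j1 ∧ i = c then δ else if j = j2 ∧ i = c then -δ else 0) +
        (if j = j1 ∧ i = c then -δ else if j = j2 ∧ i = c then δ else 0) = 0 := by
      by_cases hr1 : j = j1 ∧ i = c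
      · simp [hr1]
      · by_cases hr2 : j = j2 ∧ i = c <;> simp [hr1, hr2, Ne.symm h12]
    simp only [Matrix.add_apply, Matrix.smul_apply, hTp, hTm, Matrix.of_apply,
      smul_eq_mul]
    linarith [hz]
  have hfix := hT.2 hTpmem hTmmem hseg
  have heq : Tp j1 c = T j1 c := by rw [hfix]
  rw [hTp] at heq
  simp at heq
  linarith

/-- The row index of the (at most one) "strict" entry of a column vector `v`. -/
def sigJ {n k : ℕ} (T : Matrix (Fin (n + 1)) (Fin k) ℝ) (v : Fin (n + 1) → ℝ) :
    Fin (n + 1) :=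
  if h : ∃ j, v j ≠ rowMin T j ∧ v j ≠ rowMax T j then h.choose else 0

/-- Boolean pattern of a column vector on the rows other than `sigJ`. -/
def sigB {n k : ℕ} (T : Matrix (Fin (n + 1)) (Fin k) ℝ) (v : Fin (n + 1) → ℝ) :
    Fin n → Bool :=
  fun i => decide (v ((sigJ T v).succAbove i) = rowMax T ((sigJ T v).succAbove i))

/-- Signature of a column vector. -/
def sig {n k : ℕ} (T : Matrix (Fin (n + 1)) (Fin k) ℝ) (v : Fin (n + 1) → ℝ) :
    Fin (n + 1) × (Fin n → Bool) :=
  (sigJ T v, sigB T v)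

lemma sigJ_unique {n k : ℕ} (T : Matrix (Fin (n + 1)) (Fin k) ℝ) (v : Fin (n + 1) → ℝ)
    (j : Fin (n + 1)) (hstr : v j ≠ rowMin T j ∧ v j ≠ rowMax T j)
    (hne : j ≠ sigJ T v) :
    ∃ j', j' ≠ j ∧ (v j' ≠ rowMin T j' ∧ v j' ≠ rowMax T j') := by
  have hex : ∃ j, v j ≠ rowMin T j ∧ v j ≠ rowMax T j := ⟨j, hstr⟩
  have hJ : sigJ T v = hex.choose := by
    rw [sigJ, dif_pos hex]
  exact ⟨sigJ T v, Ne.symm (by rw [← hJ] at *; exact hne), hJ ▸ hex.choose_spec⟩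

end Stmt15Aux

/-- An extreme point of the LP family has at most `ℓ·2^{ℓ−1}` pairwise distinct columns. -/
theorem stmt15 (k ℓ : ℕ) (γ ν : Fin ℓ → ℝ) (hγ : ∀ j, 0 ≤ γ j) (hν : ∀ j, 0 ≤ ν j)
    (T : Matrix (Fin ℓ) (Fin k) ℝ)
    (hT : T ∈ ({S : Matrix (Fin ℓ) (Fin k) ℝ | IsLP γ ν S}).extremePoints ℝ) :
    (Finset.univ.image (fun c => fun r => T r c)).card ≤ ℓ * 2 ^ (ℓ - 1) := by
  classical
  open Stmt15Aux in
  rcases Nat.eq_zero_or_pos k with hk | hk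
  · subst hk
    simp
  have c0 : Fin k := ⟨0, hk⟩
  have hmem : IsLP γ ν T := hT.1
  obtain ⟨n, rfl⟩ : ∃ n, ℓ = n + 1 := by
    cases ℓ with
    | zero =>
      exfalso
      have := hmem.1.2 c0
      simpa using this
    | succ n => exact ⟨n, rfl⟩
  -- no two strict rows in a column
  have hnostrict : ∀ (c : Fin k) (j : Fin (n + 1)),
      j ≠ sigJ T (fun r => T r c) → T j c = rowMin T j ∨ T j c = rowMax T j := by
    intro c j hj
    by_contra hcon
    push_neg at hcon
    obtain ⟨j', hj'ne, hstr'⟩ := sigJ_unique T (fun r => T r c) j ⟨hcon.1, hcon.2⟩ hj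
    have hs1 : rowMin T j < T j c ∧ T j c < rowMax T j :=
      ⟨lt_of_le_of_ne (rowMin_le T j c) (Ne.symm hcon.1),
        lt_of_le_of_ne (le_rowMax T j c) hcon.2⟩
    have hs2 : rowMin T j' < T j' c ∧ T j' c < rowMax T j' :=
      ⟨lt_of_le_of_ne (rowMin_le T j' c) (Ne.symm hstr'.1),
        lt_of_le_of_ne (le_rowMax T j' c) hstr'.2⟩
    exact at_most_one_strict γ ν hγ T hT c j j' (Ne.symm hj'ne) hs1 hs2
  -- the signature map is injective on the set of columns
  have hinj : Set.InjOn (sig T) ↑(Finset.univ.image (fun c => fun r => T r c)) := by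
    intro v hv w hw hsig
    rw [Finset.mem_coe, Finset.mem_image] at hv hw
    obtain ⟨c, -, rfl⟩ := hv
    obtain ⟨c', -, rfl⟩ := hw
    have hj : sigJ T (fun r => T r c) = sigJ T (fun r => T r c') :=
      congrArg Prod.fst hsig
    have hb : sigB T (fun r => T r c) = sigB T (fun r => T r c') :=
      congrArg Prod.snd hsig
    set jj := sigJ T (fun r => T r c) with hjj
    have hcol : ∀ j, j ≠ jj → T j c = T j c' := by
      intro j hjne
      obtain ⟨i, hi⟩ := Fin.exists_succAbove_eq hjne
      have hb2 := congrFun hb i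
      rw [sigB, sigB, ← hj, ← hjj, hi] at hb2
      have h1 := hnostrict c j hjne
      have h2 := hnostrict c' j (by rw [← hj]; exact hjne)
      by_cases hmax : T j c = rowMax T j
      · have : T j c' = rowMax T j := by
          have := hb2
          simp [hmax] at this
          exact this
        rw [hmax, this]
      · have hmin : T j c = rowMin T j := h1.resolve_right hmax
        have : T j c' ≠ rowMax T j := by
          intro hcontra
          simp [hmax, hcontra] at hb2
        have hmin' : T j c' = rowMin T j := h2.resolve_right this
        rw [hmin, hmin']
    have hsums : T jj c = T jj c' := by
      have s1 : ∑ r, T r c = 1 := hmem.1.2 c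
      have s2 : ∑ r, T r c' = 1 := hmem.1.2 c'
      have e : ∑ r ∈ Finset.univ.erase jj, T r c = ∑ r ∈ Finset.univ.erase jj, T r c' :=
        Finset.sum_congr rfl fun r hr => hcol r (Finset.ne_of_mem_erase hr)
      have t1 := Finset.add_sum_erase Finset.univ (fun r => T r c) (Finset.mem_univ jj)
      have t2 := Finset.add_sum_erase Finset.univ (fun r => T r c') (Finset.mem_univ jj)
      linarith
    funext j
    by_cases hj' : j = jj
    · rw [hj']; exact hsums
    · exact hcol j hj'
  have hcard := Finset.card_le_card_of_injOn (sig T)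
    (fun v _ => Finset.mem_univ (sig T v)) hinj
  have hcount : (Finset.univ : Finset (Fin (n + 1) × (Fin n → Bool))).card
      = (n + 1) * 2 ^ n := by
    rw [Finset.card_univ]
    simp
  rw [hcount] at hcard
  simpa using hcard
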